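/- Let α, α' be i.i.d. square-integrable random variables, let l, Z, Y be random variables with l, Z, α', α, and Y - M mutually independent (M a constant). Define S = l + Z - M + α' and X = M - α' + (Y - M) + α. Then E[S·X] = E[S]·E[Y] - Var(α). -/

import Mathlib

open MeasureTheory ProbabilityTheory

/-- Lemma 2: with `S = l + Z - M + α'`, `X = M - α' + (Y - M) + α`, `Y = R + M`,
`α, α'` i.i.d., and `l, Z, α', α, R` mutually independent,
`E[S·X] = E[S]·E[Y] - Var(α)`. -/
theorem stmt_5 {Ω : Type*} [MeasurableSpace Ω] (μ : Measure Ω) [IsProbabilityMeasure μ]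
    (l Z α' α R : Ω → ℝ) (M : ℝ)
    (hl : MemLp l 2 μ) (hZ : MemLp Z 2 μ) (hα' : MemLp α' 2 μ)
    (hα : MemLp α 2 μ) (hR : MemLp R 2 μ)
    (hid : Measure.map α μ = Measure.map α' μ)
    (hindep : iIndepFun ![l, Z, α', α, R] μ)
    (S X Y : Ω → ℝ)
    (hY : Y = fun ω => R ω + M)
    (hS : S = fun ω => l ω + Z ω - M + α' ω)
    (hX : X = fun ω => M - α' ω + (Y ω - M) + α ω) :
    ∫ ω, S ω * X ω ∂μ = (∫ ω, S ω ∂μ) * (∫ ω, Y ω ∂μ) - variance α μ := by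
  -- integrability of singles
  have il : Integrable l μ := hl.integrable one_le_two
  have iZ : Integrable Z μ := hZ.integrable one_le_two
  have ia' : Integrable α' μ := hα'.integrable one_le_two
  have ia : Integrable α μ := hα.integrable one_le_two
  have iR : Integrable R μ := hR.integrable one_le_two
  -- pairwise independence
  have h02 : IndepFun l α' μ := by
    simpa using hindep.indepFun (show (0 : Fin 5) ≠ 2 by decide)
  have h03 : IndepFun l α μ := by
    simpa using hindep.indepFun (show (0 : Fin 5) ≠ 3 by decide)
  have h04 : IndepFun l R μ := by
    simpa using hindep.indepFun (show (0 : Fin 5) ≠ 4 by decide)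
  have h12 : IndepFun Z α' μ := by
    simpa using hindep.indepFun (show (1 : Fin 5) ≠ 2 by decide)
  have h13 : IndepFun Z α μ := by
    simpa using hindep.indepFun (show (1 : Fin 5) ≠ 3 by decide)
  have h14 : IndepFun Z R μ := by
    simpa using hindep.indepFun (show (1 : Fin 5) ≠ 4 by decide)
  have h23 : IndepFun α' α μ := by
    simpa using hindep.indepFun (show (2 : Fin 5) ≠ 3 by decide)
  have h24 : IndepFun α' R μ := by
    simpa using hindep.indepFun (show (2 : Fin 5) ≠ 4 by decide)
  -- integrability of products
  have ilα' : Integrable (fun ω => l ω * α' ω) μ := h02.integrable_mul il ia'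
  have ilR : Integrable (fun ω => l ω * R ω) μ := h04.integrable_mul il iR
  have ilα : Integrable (fun ω => l ω * α ω) μ := h03.integrable_mul il ia
  have iZα' : Integrable (fun ω => Z ω * α' ω) μ := h12.integrable_mul iZ ia'
  have iZR : Integrable (fun ω => Z ω * R ω) μ := h14.integrable_mul iZ iR
  have iZα : Integrable (fun ω => Z ω * α ω) μ := h13.integrable_mul iZ ia
  have iα'R : Integrable (fun ω => α' ω * R ω) μ := h24.integrable_mul ia' iR
  have iα'α : Integrable (fun ω => α' ω * α ω) μ := h23.integrable_mul ia' ia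
  have iα'2 : Integrable (fun ω => α' ω * α' ω) μ := by
    simpa [pow_two] using hα'.integrable_sq
  -- factorization of product integrals
  have e02 : ∫ ω, l ω * α' ω ∂μ = (∫ ω, l ω ∂μ) * ∫ ω, α' ω ∂μ :=
    h02.integral_fun_mul_eq_mul_integral il.aestronglyMeasurable ia'.aestronglyMeasurable
  have e03 : ∫ ω, l ω * α ω ∂μ = (∫ ω, l ω ∂μ) * ∫ ω, α ω ∂μ :=
    h03.integral_fun_mul_eq_mul_integral il.aestronglyMeasurable ia.aestronglyMeasurable
  have e04 : ∫ ω, l ω * R ω ∂μ = (∫ ω, l ω ∂μ) * ∫ ω, R ω ∂μ :=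
    h04.integral_fun_mul_eq_mul_integral il.aestronglyMeasurable iR.aestronglyMeasurable
  have e12 : ∫ ω, Z ω * α' ω ∂μ = (∫ ω, Z ω ∂μ) * ∫ ω, α' ω ∂μ :=
    h12.integral_fun_mul_eq_mul_integral iZ.aestronglyMeasurable ia'.aestronglyMeasurable
  have e13 : ∫ ω, Z ω * α ω ∂μ = (∫ ω, Z ω ∂μ) * ∫ ω, α ω ∂μ :=
    h13.integral_fun_mul_eq_mul_integral iZ.aestronglyMeasurable ia.aestronglyMeasurable
  have e14 : ∫ ω, Z ω * R ω ∂μ = (∫ ω, Z ω ∂μ) * ∫ ω, R ω ∂μ :=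
    h14.integral_fun_mul_eq_mul_integral iZ.aestronglyMeasurable iR.aestronglyMeasurable
  have e23 : ∫ ω, α' ω * α ω ∂μ = (∫ ω, α' ω ∂μ) * ∫ ω, α ω ∂μ :=
    h23.integral_fun_mul_eq_mul_integral ia'.aestronglyMeasurable ia.aestronglyMeasurable
  have e24 : ∫ ω, α' ω * R ω ∂μ = (∫ ω, α' ω ∂μ) * ∫ ω, R ω ∂μ :=
    h24.integral_fun_mul_eq_mul_integral ia'.aestronglyMeasurable iR.aestronglyMeasurable
  -- identical distribution: same first and second moments
  have hm1 : ∫ ω, α ω ∂μ = ∫ ω, α' ω ∂μ := by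
    have h1 : ∫ ω, α ω ∂μ = ∫ x, x ∂(Measure.map α μ) :=
      (integral_map hα.aestronglyMeasurable.aemeasurable aestronglyMeasurable_id).symm
    have h2 : ∫ ω, α' ω ∂μ = ∫ x, x ∂(Measure.map α' μ) :=
      (integral_map hα'.aestronglyMeasurable.aemeasurable aestronglyMeasurable_id).symm
    rw [h1, h2, hid]
  have hm2 : ∫ ω, α ω * α ω ∂μ = ∫ ω, α' ω * α' ω ∂μ := by
    have h1 : ∫ ω, α ω * α ω ∂μ = ∫ x, x * x ∂(Measure.map α μ) :=
      (integral_map hα.aestronglyMeasurable.aemeasurable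
        (measurable_id.mul measurable_id).aestronglyMeasurable).symm
    have h2 : ∫ ω, α' ω * α' ω ∂μ = ∫ x, x * x ∂(Measure.map α' μ) :=
      (integral_map hα'.aestronglyMeasurable.aemeasurable
        (measurable_id.mul measurable_id).aestronglyMeasurable).symm
    rw [h1, h2, hid]
  -- variance formula
  have hvar : variance α μ = (∫ ω, α' ω * α' ω ∂μ) - (∫ ω, α' ω ∂μ) * ∫ ω, α' ω ∂μ := by
    rw [variance_eq_sub hα]
    simp only [Pi.pow_apply, pow_two]
    rw [hm2, hm1]
  -- pointwise expansion
  have hpt : ∀ ω, S ω * X ω =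
      ((M * l ω + M * Z ω + M * α' ω - M * M)
        + (l ω * R ω + Z ω * R ω + α' ω * R ω - M * R ω)
        + (l ω * α ω + Z ω * α ω + α' ω * α ω - M * α ω))
        - (l ω * α' ω + Z ω * α' ω + α' ω * α' ω - M * α' ω) := by
    intro ω; rw [hS, hX, hY]; ring
  -- integrability of groups
  have ig1 : Integrable (fun ω => M * l ω + M * Z ω + M * α' ω - M * M) μ :=
    (((il.const_mul M).add (iZ.const_mul M)).add (ia'.const_mul M)).sub (integrable_const _)
  have ig2 : Integrable (fun ω => l ω * R ω + Z ω * R ω + α' ω * R ω - M * R ω) μ :=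
    ((ilR.add iZR).add iα'R).sub (iR.const_mul M)
  have ig3 : Integrable (fun ω => l ω * α ω + Z ω * α ω + α' ω * α ω - M * α ω) μ :=
    ((ilα.add iZα).add iα'α).sub (ia.const_mul M)
  have ig4 : Integrable (fun ω => l ω * α' ω + Z ω * α' ω + α' ω * α' ω - M * α' ω) μ :=
    ((ilα'.add iZα').add iα'2).sub (ia'.const_mul M)
  have ig12 : Integrable (fun ω => (M * l ω + M * Z ω + M * α' ω - M * M)
      + (l ω * R ω + Z ω * R ω + α' ω * R ω - M * R ω)) μ := ig1.add ig2
  have ig123 : Integrable (fun ω => ((M * l ω + M * Z ω + M * α' ω - M * M)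
      + (l ω * R ω + Z ω * R ω + α' ω * R ω - M * R ω))
      + (l ω * α ω + Z ω * α ω + α' ω * α ω - M * α ω)) μ := ig12.add ig3
  -- inner sums for J-lemmas
  have iMl : Integrable (fun ω => M * l ω) μ := il.const_mul M
  have iMZ : Integrable (fun ω => M * Z ω) μ := iZ.const_mul M
  have iMα' : Integrable (fun ω => M * α' ω) μ := ia'.const_mul M
  have iMα : Integrable (fun ω => M * α ω) μ := ia.const_mul M
  have iMR : Integrable (fun ω => M * R ω) μ := iR.const_mul M
  have is1a : Integrable (fun ω => M * l ω + M * Z ω) μ := iMl.add iMZ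
  have is1b : Integrable (fun ω => M * l ω + M * Z ω + M * α' ω) μ := is1a.add iMα'
  have is2a : Integrable (fun ω => l ω * R ω + Z ω * R ω) μ := ilR.add iZR
  have is2b : Integrable (fun ω => l ω * R ω + Z ω * R ω + α' ω * R ω) μ := is2a.add iα'R
  have is3a : Integrable (fun ω => l ω * α ω + Z ω * α ω) μ := ilα.add iZα
  have is3b : Integrable (fun ω => l ω * α ω + Z ω * α ω + α' ω * α ω) μ := is3a.add iα'α
  have is4a : Integrable (fun ω => l ω * α' ω + Z ω * α' ω) μ := ilα'.add iZα'
  have is4b : Integrable (fun ω => l ω * α' ω + Z ω * α' ω + α' ω * α' ω) μ := is4a.add iα'2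
  have islZ : Integrable (fun ω => l ω + Z ω) μ := il.add iZ
  have islZM : Integrable (fun ω => l ω + Z ω - M) μ := islZ.sub (integrable_const M)
  have hLHS : ∫ ω, S ω * X ω ∂μ =
      ((∫ ω, M * l ω + M * Z ω + M * α' ω - M * M ∂μ)
        + (∫ ω, l ω * R ω + Z ω * R ω + α' ω * R ω - M * R ω ∂μ)
        + (∫ ω, l ω * α ω + Z ω * α ω + α' ω * α ω - M * α ω ∂μ))
        - ∫ ω, l ω * α' ω + Z ω * α' ω + α' ω * α' ω - M * α' ω ∂μ := by
    rw [show (fun ω => S ω * X ω) = fun ω =>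
      ((M * l ω + M * Z ω + M * α' ω - M * M)
        + (l ω * R ω + Z ω * R ω + α' ω * R ω - M * R ω)
        + (l ω * α ω + Z ω * α ω + α' ω * α ω - M * α ω))
        - (l ω * α' ω + Z ω * α' ω + α' ω * α' ω - M * α' ω) from funext hpt]
    rw [integral_sub ig123 ig4, integral_add ig12 ig3, integral_add ig1 ig2]
  -- compute each group integral
  have J1 : ∫ ω, M * l ω + M * Z ω + M * α' ω - M * M ∂μ
      = M * (∫ ω, l ω ∂μ) + M * (∫ ω, Z ω ∂μ) + M * (∫ ω, α' ω ∂μ) - M * M := by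
    rw [integral_sub is1b (integrable_const (M * M)),
      integral_add is1a iMα', integral_add iMl iMZ,
      integral_const_mul, integral_const_mul, integral_const_mul, integral_const]
    simp
  have J2 : ∫ ω, l ω * R ω + Z ω * R ω + α' ω * R ω - M * R ω ∂μ
      = (∫ ω, l ω ∂μ) * (∫ ω, R ω ∂μ) + (∫ ω, Z ω ∂μ) * (∫ ω, R ω ∂μ)
        + (∫ ω, α' ω ∂μ) * (∫ ω, R ω ∂μ) - M * ∫ ω, R ω ∂μ := by
    rw [integral_sub is2b iMR, integral_add is2a iα'R, integral_add ilR iZR,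
      integral_const_mul, e04, e14, e24]
  have J3 : ∫ ω, l ω * α ω + Z ω * α ω + α' ω * α ω - M * α ω ∂μ
      = (∫ ω, l ω ∂μ) * (∫ ω, α ω ∂μ) + (∫ ω, Z ω ∂μ) * (∫ ω, α ω ∂μ)
        + (∫ ω, α' ω ∂μ) * (∫ ω, α ω ∂μ) - M * ∫ ω, α ω ∂μ := by
    rw [integral_sub is3b iMα, integral_add is3a iα'α, integral_add ilα iZα,
      integral_const_mul, e03, e13, e23]
  have J4 : ∫ ω, l ω * α' ω + Z ω * α' ω + α' ω * α' ω - M * α' ω ∂μ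
      = (∫ ω, l ω ∂μ) * (∫ ω, α' ω ∂μ) + (∫ ω, Z ω ∂μ) * (∫ ω, α' ω ∂μ)
        + (∫ ω, α' ω * α' ω ∂μ) - M * ∫ ω, α' ω ∂μ := by
    rw [integral_sub is4b iMα', integral_add is4a iα'2, integral_add ilα' iZα',
      integral_const_mul, e02, e12]
  have hES : ∫ ω, S ω ∂μ = (∫ ω, l ω ∂μ) + (∫ ω, Z ω ∂μ) - M + ∫ ω, α' ω ∂μ := by
    have key : ∫ ω, (l ω + Z ω - M) + α' ω ∂μ
        = (∫ ω, l ω ∂μ) + (∫ ω, Z ω ∂μ) - M + ∫ ω, α' ω ∂μ := by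
      rw [integral_add islZM ia', integral_sub islZ (integrable_const M),
        integral_add il iZ, integral_const]
      simp
    rw [hS]; exact key
  have hEY : ∫ ω, Y ω ∂μ = (∫ ω, R ω ∂μ) + M := by
    have key : ∫ ω, R ω + M ∂μ = (∫ ω, R ω ∂μ) + M := by
      rw [integral_add iR (integrable_const M), integral_const]; simp
    rw [hY]; exact key
  rw [hLHS, J1, J2, J3, J4, hES, hEY, hvar, hm1]
  ring
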